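/- For every integer p ≥ 2, the radius of convergence of the power series Σ_{n≥0} C_n^{(p)} z^n (with complex variable z) is exactly R_p = (p−1)^{p−1}/p^p. -/

import Mathlib

/-- The Fuss–Catalan numbers of order `p`: `C_n^{(p)} = binom(pn, n) / ((p-1)n + 1)`. -/
noncomputable def fussCatalan (p n : ℕ) : ℂ :=
  ((p * n).choose n : ℂ) / (((p - 1) * n + 1 : ℕ) : ℂ)

/-- `R_p = (p-1)^(p-1) / p^p`. -/
noncomputable def Rp (p : ℕ) : ℝ :=
  ((p - 1 : ℕ) : ℝ) ^ (p - 1) / (p : ℝ) ^ p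

open Filter Finset Nat
open scoped Topology NNReal

lemma fact_mul_prod (m j : ℕ) :
    m ! * ∏ k ∈ range j, (m + k + 1) = (m + j)! := by
  induction j with
  | zero => simp
  | succ j ih =>
    rw [prod_range_succ, ← mul_assoc, ih, ← Nat.add_assoc, Nat.factorial_succ]
    ring

lemma key (q n : ℕ) :
    ((q+1)*(n+1)).choose (n+1) * ((n+1) * ∏ k ∈ range q, (q*n+k+1)) =
    ((q+1)*n).choose n * ∏ k ∈ range (q+1), ((q+1)*n+k+1) := by
  apply Nat.eq_of_mul_eq_mul_right (Nat.mul_pos n.factorial_pos (q*n).factorial_pos)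
  have h1 : n ≤ (q+1)*n := by nlinarith
  have h2 : n+1 ≤ (q+1)*(n+1) := by nlinarith
  have e1 : ((q+1)*n).choose n * (n ! * ((q+1)*n - n)!) = ((q+1)*n)! := by
    rw [← mul_assoc]; exact Nat.choose_mul_factorial_mul_factorial h1
  have e2 : ((q+1)*(n+1)).choose (n+1) * ((n+1)! * ((q+1)*(n+1) - (n+1))!) = ((q+1)*(n+1))! := by
    rw [← mul_assoc]; exact Nat.choose_mul_factorial_mul_factorial h2
  have hs1 : (q+1)*n - n = q*n := by
    have : (q+1)*n = q*n + n := by ring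
    omega
  have hs2 : (q+1)*(n+1) - (n+1) = q*n + q := by
    have : (q+1)*(n+1) = (q*n+q) + (n+1) := by ring
    omega
  rw [hs1] at e1; rw [hs2] at e2
  calc ((q+1)*(n+1)).choose (n+1) * ((n+1) * ∏ k ∈ range q, (q*n+k+1)) * (n ! * (q*n)!)
      = ((q+1)*(n+1)).choose (n+1) * (((n+1) * n !) * ((q*n)! * ∏ k ∈ range q, (q*n+k+1))) := by
        ring
    _ = ((q+1)*(n+1)).choose (n+1) * ((n+1)! * (q*n+q)!) := by
        rw [← Nat.factorial_succ, fact_mul_prod]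
    _ = ((q+1)*(n+1))! := e2
    _ = ((q+1)*n + (q+1))! := by ring_nf
    _ = ((q+1)*n)! * ∏ k ∈ range (q+1), ((q+1)*n+k+1) := (fact_mul_prod _ _).symm
    _ = ((q+1)*n).choose n * (n ! * (q*n)!) * ∏ k ∈ range (q+1), ((q+1)*n+k+1) := by rw [e1]
    _ = ((q+1)*n).choose n * (∏ k ∈ range (q+1), ((q+1)*n+k+1)) * (n ! * (q*n)!) := by ring

lemma norm_fussCatalan (q n : ℕ) :
    ‖fussCatalan (q+1) n‖ = (((q+1)*n).choose n : ℝ) / ((q*n+1 : ℕ):ℝ) := by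
  simp only [fussCatalan, norm_div, RCLike.norm_natCast, Nat.add_sub_cancel]

lemma ratio_eq (q n : ℕ) :
    ‖fussCatalan (q+1) (n+1)‖ / ‖fussCatalan (q+1) n‖ =
      (∏ k ∈ range q, ((((q+1)*n+k+1 : ℕ):ℝ) / ((q*n+k+1 : ℕ):ℝ))) *
        ((((q+1)*n+q+1 : ℕ):ℝ) / ((1*n+1 : ℕ):ℝ)) *
        (((q*n+1 : ℕ):ℝ) / ((q*n+q+1 : ℕ):ℝ)) := by
  have hk := key q n
  rw [prod_range_succ] at hk
  rw [norm_fussCatalan, norm_fussCatalan, Finset.prod_div_distrib,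
    ← Nat.cast_prod, ← Nat.cast_prod]
  have hc : q*(n+1)+1 = q*n+q+1 := by ring
  rw [hc]
  set A := ((q+1)*(n+1)).choose (n+1) with hA
  set B := ((q+1)*n).choose n with hB
  set P := ∏ k ∈ range q, (q*n+k+1) with hP
  set Q := ∏ k ∈ range q, ((q+1)*n+k+1) with hQ
  have hkr : (A:ℝ) * (((n:ℝ)+1) * P) = (B:ℝ) * ((Q:ℝ) * (((q:ℝ)+1)*n+q+1)) := by
    exact_mod_cast congrArg (Nat.cast : ℕ → ℝ) hk
  have hBne : (B:ℝ) ≠ 0 := by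
    exact_mod_cast Nat.pos_iff_ne_zero.mp (Nat.choose_pos (by nlinarith))
  have hPne : (P:ℝ) ≠ 0 := by
    have : 0 < P := Finset.prod_pos (fun k _ => by omega)
    exact_mod_cast Nat.pos_iff_ne_zero.mp this
  push_cast
  have h1 : ((q:ℝ)*n+1) ≠ 0 := by positivity
  have h3 : ((n:ℝ)+1) ≠ 0 := by positivity
  have h4 : ((q:ℝ)*n+q+1) ≠ 0 := by positivity
  field_simp
  ring_nf
  ring_nf at hkr
  linear_combination hkr

lemma aux_tendsto (a b c d : ℕ) (hc : 0 < c) :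
    Tendsto (fun n : ℕ => ((a*n+b : ℕ):ℝ) / ((c*n+d : ℕ):ℝ)) atTop (𝓝 ((a:ℝ)/c)) := by
  have hcc : (c:ℝ) ≠ 0 := by positivity
  have h0 : Tendsto (fun n : ℕ => ((a:ℝ) + b/n) / ((c:ℝ) + d/n)) atTop (𝓝 ((a:ℝ)/c)) := by
    have ha : Tendsto (fun n : ℕ => (a:ℝ) + b/n) atTop (𝓝 (a:ℝ)) := by
      simpa using tendsto_const_nhds.add (tendsto_const_div_atTop_nhds_zero_nat (b:ℝ))
    have hb : Tendsto (fun n : ℕ => (c:ℝ) + d/n) atTop (𝓝 (c:ℝ)) := by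
      simpa using tendsto_const_nhds.add (tendsto_const_div_atTop_nhds_zero_nat (d:ℝ))
    exact ha.div hb hcc
  refine h0.congr' ?_
  filter_upwards [eventually_gt_atTop 0] with n hn
  have hn' : (n:ℝ) ≠ 0 := by positivity
  push_cast
  field_simp
  try ring

lemma ratio_tendsto (q : ℕ) (hq : 1 ≤ q) :
    Tendsto (fun n : ℕ => ‖fussCatalan (q+1) (n+1)‖ / ‖fussCatalan (q+1) n‖) atTop
      (𝓝 (((q+1:ℕ):ℝ)^(q+1) / (q:ℝ)^q)) := by
  have h := ((tendsto_finset_prod (range q)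
      (fun k (_ : k ∈ range q) => aux_tendsto (q+1) (k+1) q (k+1) hq)).mul
      (aux_tendsto (q+1) (q+1) 1 1 one_pos)).mul (aux_tendsto q 1 q (q+1) hq)
  have hval : (∏ k ∈ range q, (((q+1:ℕ):ℝ)/(q:ℕ))) * (((q+1:ℕ):ℝ)/((1:ℕ):ℝ))
      * ((q:ℝ)/(q:ℕ)) = ((q+1:ℕ):ℝ)^(q+1) / (q:ℝ)^q := by
    have hqr : (q:ℝ) ≠ 0 := by positivity
    rw [Finset.prod_const, Finset.card_range]
    push_cast
    field_simp
    rw [div_pow, mul_assoc, div_mul_cancel₀ _ (pow_ne_zero _ hqr)]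
    ring
  rw [hval] at h
  exact h.congr (fun n => (ratio_eq q n).symm)


/-- For every integer `p ≥ 2`, the radius of convergence of the power series
`Σ_{n ≥ 0} C_n^{(p)} z^n` is exactly `R_p = (p-1)^(p-1)/p^p`. -/
theorem fussCatalan_radius (p : ℕ) (hp : 2 ≤ p) :
    (FormalMultilinearSeries.ofScalars ℂ (fun n => fussCatalan p n)).radius
      = ENNReal.ofReal (Rp p) := by
  obtain ⟨q, rfl⟩ : ∃ q, p = q + 1 := ⟨p-1, by omega⟩
  have hq : 1 ≤ q := by omega
  have hpos : (0:ℝ) < ((q+1:ℕ):ℝ)^(q+1) / (q:ℝ)^q := by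
    have : (0:ℝ) < (q:ℝ) := by exact_mod_cast hq
    positivity
  set r : ℝ≥0 := ⟨((q+1:ℕ):ℝ)^(q+1) / (q:ℝ)^q, hpos.le⟩ with hr
  have hrne : r ≠ 0 := by
    rw [← NNReal.coe_ne_zero]
    exact ne_of_gt hpos
  have hc : Filter.Tendsto (fun n => ‖fussCatalan (q+1) (n+1)‖ / ‖fussCatalan (q+1) n‖)
      Filter.atTop (nhds (r:ℝ)) := ratio_tendsto q hq
  rw [FormalMultilinearSeries.ofScalars_radius_eq_inv_of_tendsto ℂ _ hrne hc]
  rw [← ENNReal.ofReal_coe_nnreal]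
  congr 1
  rw [NNReal.coe_inv, hr]
  simp only [Rp, NNReal.coe_mk, Nat.add_sub_cancel]
  exact inv_div _ _
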